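/- Let H be a real symmetric n×n matrix with Hm = c·𝟙 for some c ∈ ℝ and m ∈ ℝⁿ with positive entries. Swap two coordinates j ≠ k of m to obtain m'. Then ½ m'ᵀ H m' - ½ mᵀ H m = -(m_j - m_k)² H_{jk}. In particular if H_{jk} > 0 and m_j ≠ m_k, then m'ᵀ H m' < mᵀ H m. -/

import Mathlib

open Finset Matrix

theorem stmt_14 {n : ℕ} (H : Matrix (Fin n) (Fin n) ℝ) (hsymm : H.IsSymm)
    (hHdiag : ∀ i, H i i = 0)
    (c : ℝ) (m : Fin n → ℝ) (hm : ∀ i, 0 < m i)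
    (hHm : H.mulVec m = fun _ => c)
    (j k : Fin n) (hjk : j ≠ k) :
    let m' : Fin n → ℝ := Function.update (Function.update m j (m k)) k (m j)
    (1 / 2) * (m' ⬝ᵥ H.mulVec m') - (1 / 2) * (m ⬝ᵥ H.mulVec m)
      = -(m j - m k) ^ 2 * H j k ∧
    (0 < H j k → m j ≠ m k → m' ⬝ᵥ H.mulVec m' < m ⬝ᵥ H.mulVec m) := by
  intro m'
  set d : ℝ := m j - m k with hd
  set v : Fin n → ℝ := Pi.single k d - Pi.single j d with hv
  have hkj : H k j = H j k := by
    conv_lhs => rw [← hsymm]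
    rfl
  have hm' : m' = m + v := by
    funext i
    by_cases hik : i = k
    · subst hik
      simp [m', hv, Function.update_of_ne (Ne.symm hjk), Pi.single_apply, Ne.symm hjk, hd]
    · by_cases hij : i = j
      · subst hij
        simp [m', hv, Function.update_of_ne hik, Pi.single_apply, hjk, hik, hd]
      · simp [m', hv, Function.update_of_ne hik, Function.update_of_ne hij,
          Pi.single_apply, hik, hij]
  have h1 : v ⬝ᵥ H.mulVec m = 0 := by
    rw [hHm, hv, sub_dotProduct, single_dotProduct, single_dotProduct]
    ring
  have h2 : m ⬝ᵥ H.mulVec v = 0 := by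
    rw [dotProduct_mulVec, ← mulVec_transpose, hsymm.eq, hHm]
    rw [hv, dotProduct_sub, dotProduct_single, dotProduct_single]
    ring
  have h3 : v ⬝ᵥ H.mulVec v = -2 * d ^ 2 * H j k := by
    rw [hv, mulVec_sub, mulVec_single, mulVec_single]
    simp only [sub_dotProduct, dotProduct_sub, single_dotProduct]
    simp only [Pi.smul_apply, Matrix.col_apply, op_smul_eq_mul]
    rw [hHdiag j, hHdiag k, hkj]
    ring
  have key : m' ⬝ᵥ H.mulVec m' = m ⬝ᵥ H.mulVec m - 2 * d ^ 2 * H j k := by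
    rw [hm', mulVec_add, add_dotProduct, dotProduct_add, dotProduct_add, h1, h2, h3]
    ring
  constructor
  · rw [key]; ring
  · intro hpos hne
    have hd0 : d ≠ 0 := sub_ne_zero.mpr hne
    have hd2 : 0 < d ^ 2 := (sq_nonneg d).lt_of_ne (Ne.symm (pow_ne_zero _ hd0))
    rw [key]
    nlinarith
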